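/- For double-slot charging, the transmission probability p_t = p_g · p_h/(p_h + p_g(1 + p₂/p_h)), with p_h = 1−e^{−π r_h² λ_p}, p_g = e^{−π r_g² λ_p}, p₂ = e^{−π h₁² λ_p}−e^{−π r_h² λ_p}, h₁ = (P_s/(η P_p))^{−1/α}, is a strictly decreasing function of P_s on the interval (η P_p r_h^{−α}, 2η P_p r_h^{−α}]. -/
import Mathlib


open Real Set

/-- For double-slot charging, `p_t(P_s) = p_g · p_h/(p_h + p_g(1 + p₂(P_s)/p_h))`, with
`p_h = 1−e^{−π r_h² λ_p}`, `p_g = e^{−π r_g² λ_p}`, `p₂(P_s) = e^{−π h₁² λ_p} − e^{−π r_h² λ_p}`,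
`h₁ = (P_s/(η P_p))^{−1/α}`, is strictly decreasing in `P_s` on
`(η P_p r_h^{−α}, 2 η P_p r_h^{−α}]`. -/
theorem stmt5 (lp rh rg Pp a e : ℝ) (hlp : 0 < lp) (hrh : 0 < rh) (hrhrg : rh < rg)
    (hPp : 0 < Pp) (ha : 2 < a) (he0 : 0 < e) (he1 : e < 1) :
    StrictAntiOn (fun Ps : ℝ =>
        let ph := 1 - Real.exp (-(π * rh ^ 2 * lp))
        let pg := Real.exp (-(π * rg ^ 2 * lp))
        let h1 := (Ps / (e * Pp)) ^ (-(1 / a) : ℝ)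
        let p2 := Real.exp (-(π * h1 ^ 2 * lp)) - Real.exp (-(π * rh ^ 2 * lp))
        pg * (ph / (ph + pg * (1 + p2 / ph))))
      (Set.Ioc (e * Pp * rh ^ (-a : ℝ)) (2 * e * Pp * rh ^ (-a : ℝ))) := by
  have ha0 : (0:ℝ) < a := by linarith
  have hePp : (0:ℝ) < e * Pp := mul_pos he0 hPp
  have hexp : -(1/a : ℝ) < 0 := by
    have : (0:ℝ) < 1/a := by positivity
    linarith
  have hph : 0 < 1 - Real.exp (-(π * rh ^ 2 * lp)) := by
    have : Real.exp (-(π * rh ^ 2 * lp)) < 1 := by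
      rw [Real.exp_lt_one_iff]
      have : (0:ℝ) < π * rh ^ 2 * lp := by positivity
      linarith
    linarith
  have hpg : 0 < Real.exp (-(π * rg ^ 2 * lp)) := Real.exp_pos _
  -- key facts about h1 on the interval
  have hb : ∀ Ps ∈ Set.Ioc (e * Pp * rh ^ (-a : ℝ)) (2 * e * Pp * rh ^ (-a : ℝ)),
      rh ^ (-a : ℝ) < Ps / (e * Pp) := by
    intro Ps hPs
    rw [lt_div_iff₀ hePp]
    have := hPs.1
    nlinarith
  have hh1lt : ∀ Ps ∈ Set.Ioc (e * Pp * rh ^ (-a : ℝ)) (2 * e * Pp * rh ^ (-a : ℝ)),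
      (Ps / (e * Pp)) ^ (-(1 / a) : ℝ) < rh := by
    intro Ps hPs
    have h1 := hb Ps hPs
    have hbase : (0:ℝ) < rh ^ (-a : ℝ) := Real.rpow_pos_of_pos hrh _
    have := Real.rpow_lt_rpow_of_neg hbase h1 hexp
    calc (Ps / (e * Pp)) ^ (-(1 / a) : ℝ) < (rh ^ (-a : ℝ)) ^ (-(1 / a) : ℝ) := this
      _ = rh := by
        rw [← Real.rpow_mul hrh.le]
        have : (-a) * -(1/a) = 1 := by field_simp
        rw [this, Real.rpow_one]
  intro x hx y hy hxy
  simp only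
  set ph := 1 - Real.exp (-(π * rh ^ 2 * lp)) with hph_def
  set pg := Real.exp (-(π * rg ^ 2 * lp)) with hpg_def
  have hx0 : 0 < x := lt_trans (by positivity) hx.1
  -- h1 y < h1 x
  have hh1mono : (y / (e * Pp)) ^ (-(1 / a) : ℝ) < (x / (e * Pp)) ^ (-(1 / a) : ℝ) := by
    apply Real.rpow_lt_rpow_of_neg (by positivity) _ hexp
    exact div_lt_div_of_pos_right hxy hePp
  have hh1y0 : 0 < (y / (e * Pp)) ^ (-(1 / a) : ℝ) := Real.rpow_pos_of_pos (by
    have : 0 < y := lt_trans hx0 hxy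
    positivity) _
  -- p2 x < p2 y
  have hsq : ((y / (e * Pp)) ^ (-(1 / a) : ℝ)) ^ 2 < ((x / (e * Pp)) ^ (-(1 / a) : ℝ)) ^ 2 :=
    pow_lt_pow_left₀ hh1mono hh1y0.le two_ne_zero
  have hp2 : Real.exp (-(π * ((x / (e * Pp)) ^ (-(1 / a) : ℝ)) ^ 2 * lp)) <
      Real.exp (-(π * ((y / (e * Pp)) ^ (-(1 / a) : ℝ)) ^ 2 * lp)) := by
    apply Real.exp_lt_exp.2
    have := mul_lt_mul_of_pos_right (mul_lt_mul_of_pos_left hsq Real.pi_pos) hlp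
    linarith
  -- p2 x > 0
  have hp2x : 0 < Real.exp (-(π * ((x / (e * Pp)) ^ (-(1 / a) : ℝ)) ^ 2 * lp)) -
      Real.exp (-(π * rh ^ 2 * lp)) := by
    have h1x := hh1lt x hx
    have hh1x0 : 0 < (x / (e * Pp)) ^ (-(1 / a) : ℝ) := Real.rpow_pos_of_pos (by positivity) _
    have : ((x / (e * Pp)) ^ (-(1 / a) : ℝ)) ^ 2 < rh ^ 2 := pow_lt_pow_left₀ h1x hh1x0.le two_ne_zero
    have := Real.exp_lt_exp.2 (show -(π * rh ^ 2 * lp) <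
        -(π * ((x / (e * Pp)) ^ (-(1 / a) : ℝ)) ^ 2 * lp) by
      have := mul_lt_mul_of_pos_right (mul_lt_mul_of_pos_left this Real.pi_pos) hlp
      linarith)
    linarith
  set p2x := Real.exp (-(π * ((x / (e * Pp)) ^ (-(1 / a) : ℝ)) ^ 2 * lp)) -
      Real.exp (-(π * rh ^ 2 * lp)) with hp2x_def
  set p2y := Real.exp (-(π * ((y / (e * Pp)) ^ (-(1 / a) : ℝ)) ^ 2 * lp)) -
      Real.exp (-(π * rh ^ 2 * lp)) with hp2y_def
  have hp2lt : p2x < p2y := by rw [hp2x_def, hp2y_def]; linarith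
  -- denominators
  have hDx : 0 < ph + pg * (1 + p2x / ph) := by
    have : 0 < p2x / ph := div_pos hp2x hph
    have : 0 < 1 + p2x / ph := by linarith
    positivity
  have hDlt : ph + pg * (1 + p2x / ph) < ph + pg * (1 + p2y / ph) := by
    have : p2x / ph < p2y / ph := div_lt_div_of_pos_right hp2lt hph
    nlinarith
  have := div_lt_div_of_pos_left (mul_pos hpg hph) hDx hDlt
  calc pg * (ph / (ph + pg * (1 + p2y / ph))) = pg * ph / (ph + pg * (1 + p2y / ph)) := by ring
    _ < pg * ph / (ph + pg * (1 + p2x / ph)) := this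
    _ = pg * (ph / (ph + pg * (1 + p2x / ph))) := by ring
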